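/- Let u ∈ μ_{p−1} ⊆ ℤ_p^×, f_u(X) = X^p + u·p·X, and let {ω_n}_{n≥0} ⊆ ℚ̄_p be a coherent set of roots for f_u (ω_0 = 0, ω_1 ≠ 0, f_u(ω_n) = ω_{n−1} for n ≥ 1). Then for every n ≥ 1: (i) f_u(u·X) = u·f_u(X); (ii) the polynomial f_u^{∘n}(X)/f_u^{∘(n−1)}(X) (the n-fold composite divided by the (n−1)-fold composite) is Eisenstein over ℤ_p of degree p^{n−1}(p−1) and is the minimal polynomial of ω_n over ℚ_p, and u·ω_n is also a root of it; (iii) there exists a ℚ_p-algebra automorphism φ of ℚ_p(ω_n) with φ(ω_m) = u·ω_m for all 1 ≤ m ≤ n. -/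

import Mathlib

open Polynomial Filter IntermediateField

variable (p : ℕ) [Fact p.Prime]

/-- A fixed algebraic closure of `ℚ_p`. -/
noncomputable abbrev Qpbar := AlgebraicClosure ℚ_[p]

/-- `n`-fold composite `f^{∘n}` of a polynomial with itself (`f^{∘0} = X`). -/
noncomputable def iterComp (f : Polynomial ℤ_[p]) : ℕ → Polynomial ℤ_[p]
  | 0 => X
  | n + 1 => f.comp (iterComp f n)

set_option maxHeartbeats 1000000 in
set_option synthInstance.maxHeartbeats 400000 in
/-- let `u ∈ μ_{p-1} ⊆ ℤ_p^×`, `f_u(X) = X^p + u p X`, and let `{ω_n}` be a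
coherent set of roots for `f_u`.  Then for every `n ≥ 1`:
(i) `f_u(u X) = u f_u(X)`;
(ii) the quotient `Q = f_u^{∘n}/f_u^{∘(n-1)}` (i.e. the `Q` with
`f_u^{∘n} = Q ⬝ f_u^{∘(n-1)}`) is Eisenstein over `ℤ_p` of degree `p^{n-1}(p-1)`, is the
minimal polynomial of `ω_n` over `ℚ_p`, and `u ω_n` is also one of its roots;
(iii) there is a `ℚ_p`-algebra automorphism `φ` of `ℚ_p(ω_n)` with `φ(ω_m) = u ω_m` for
all `1 ≤ m ≤ n`. -/
theorem statement18 (hp : Odd p)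
    (u : ℤ_[p]) (hu : u ^ (p - 1) = 1)
    (ω : ℕ → Qpbar p)
    (hω0 : ω 0 = 0) (hω1 : ω 1 ≠ 0)
    (hωc : ∀ i : ℕ, 1 ≤ i →
      Polynomial.aeval (ω i)
        ((X ^ p + C (u * p) * X : Polynomial ℤ_[p]).map (algebraMap ℤ_[p] ℚ_[p])) =
        ω (i - 1)) :
    ((X ^ p + C (u * p) * X : Polynomial ℤ_[p]).comp (C u * X) =
      C u * (X ^ p + C (u * p) * X)) ∧
    (∀ n : ℕ, 1 ≤ n →
      ∃ Q : Polynomial ℤ_[p],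
        iterComp p (X ^ p + C (u * p) * X) n =
          Q * iterComp p (X ^ p + C (u * p) * X) (n - 1) ∧
        Q.natDegree = p ^ (n - 1) * (p - 1) ∧
        Q.IsEisensteinAt (Ideal.span {(p : ℤ_[p])}) ∧
        minpoly ℚ_[p] (ω n) = Q.map (algebraMap ℤ_[p] ℚ_[p]) ∧
        Polynomial.aeval (algebraMap ℚ_[p] (Qpbar p) (u : ℚ_[p]) * ω n)
          (Q.map (algebraMap ℤ_[p] ℚ_[p])) = 0) ∧
    (∀ n : ℕ, 1 ≤ n →
      ∃ φ : IntermediateField.adjoin ℚ_[p] {ω n} ≃ₐ[ℚ_[p]]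
          IntermediateField.adjoin ℚ_[p] {ω n},
        ∀ m : ℕ, 1 ≤ m → m ≤ n →
          ∀ h : ω m ∈ IntermediateField.adjoin ℚ_[p] {ω n},
            (↑(φ ⟨ω m, h⟩) : Qpbar p) =
              algebraMap ℚ_[p] (Qpbar p) (u : ℚ_[p]) * ω m) := by
  classical
  have hpprime : p.Prime := Fact.out
  have hp1 : 1 ≤ p := hpprime.one_lt.le
  have hp3 : 3 ≤ p := by
    have h2 := hpprime.two_le
    rcases hp with ⟨k, hk⟩
    omega
  set f : Polynomial ℤ_[p] := X ^ p + C (u * p) * X with hfdef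
  set ρ := algebraMap ℤ_[p] ℚ_[p] with hρ
  set A := algebraMap ℚ_[p] (Qpbar p) with hA
  have hup : u ^ p = u := by
    have h : u ^ (p - 1 + 1) = u := by rw [pow_succ, hu, one_mul]
    rwa [show p - 1 + 1 = p by omega] at h
  have huu : IsUnit u := by
    refine IsUnit.of_mul_eq_one (u ^ (p - 2)) ?_
    rw [← pow_succ', show p - 2 + 1 = p - 1 by omega, hu]
  have hune : u ≠ 0 := huu.ne_zero
  have hpne : (p : ℤ_[p]) ≠ 0 := by
    exact_mod_cast Nat.cast_ne_zero.mpr hpprime.ne_zero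
  -- Part (i)
  have part1 : f.comp (C u * X) = C u * f := by
    simp only [hfdef, add_comp, pow_comp, mul_comp, X_comp, C_comp, mul_pow, ← C_pow, hup]
    ring
  -- monicity and degrees
  have hlt : (C (u * (p : ℤ_[p])) * X).degree < (X ^ p : Polynomial ℤ_[p]).degree := by
    calc (C (u * (p : ℤ_[p])) * X).degree ≤ 0 + 1 := by
          apply le_trans (degree_mul_le _ _)
          exact add_le_add degree_C_le degree_X_le
      _ < (X ^ p : Polynomial ℤ_[p]).degree := by
          rw [degree_X_pow]; exact_mod_cast by omega
  have hfmonic : f.Monic := (monic_X_pow p).add_of_left hlt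
  have hfdeg : f.natDegree = p := by
    apply natDegree_eq_of_degree_eq_some
    rw [hfdef, degree_add_eq_left_of_degree_lt hlt, degree_X_pow]
  have hGmonic : ∀ k, (iterComp p f k).Monic ∧ (iterComp p f k).natDegree = p ^ k := by
    intro k
    induction k with
    | zero => exact ⟨monic_X, by simp [iterComp]⟩
    | succ k ih =>
      constructor
      · exact hfmonic.comp ih.1 (by rw [ih.2]; positivity)
      · show (f.comp (iterComp p f k)).natDegree = _
        rw [natDegree_comp, hfdeg, ih.2, pow_succ, mul_comm]
  -- reduction mod p
  set I : Ideal ℤ_[p] := Ideal.span {(p : ℤ_[p])} with hI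
  set π := (PadicInt.toZMod : ℤ_[p] →+* ZMod p) with hπ
  have hmemI : ∀ x : ℤ_[p], x ∈ I ↔ π x = 0 := by
    intro x
    rw [hI, ← PadicInt.maximalIdeal_eq_span_p, ← PadicInt.ker_toZMod, RingHom.mem_ker, hπ]
  have hmk0 : π (u * p) = 0 := by
    rw [← hmemI, hI, Ideal.mem_span_singleton]
    exact Dvd.intro_left u rfl
  have hmapf : f.map π = X ^ p := by
    rw [hfdef]
    simp [hmk0]
  have hmapG : ∀ k, (iterComp p f k).map π = X ^ (p ^ k) := by
    intro k
    induction k with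
    | zero => simp [iterComp]
    | succ k ih =>
      show (f.comp (iterComp p f k)).map π = _
      rw [Polynomial.map_comp, hmapf, ih, X_pow_comp, ← pow_mul]; rw [pow_succ]
  have hG0 : ∀ k, (iterComp p f k).eval 0 = 0 := by
    intro k
    induction k with
    | zero => simp [iterComp]
    | succ k ih =>
      show (f.comp (iterComp p f k)).eval 0 = 0
      rw [eval_comp, ih, hfdef]
      simp [zero_pow hpprime.ne_zero]
  -- evaluation facts
  have K2 : ∀ k i, Polynomial.aeval (ω (i + k)) ((iterComp p f k).map ρ) = ω i := by
    intro k
    induction k with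
    | zero => intro i; simp [iterComp]
    | succ k ih =>
      intro i
      show Polynomial.aeval (ω (i + (k + 1))) ((f.comp (iterComp p f k)).map ρ) = ω i
      rw [Polynomial.map_comp, aeval_comp]
      rw [show i + (k + 1) = (i + 1) + k by omega, ih (i + 1)]
      simpa using hωc (i + 1) (by omega)
  have K1 : ∀ x : Qpbar p, Polynomial.aeval (A (u : ℚ_[p]) * x) (f.map ρ) =
      A (u : ℚ_[p]) * Polynomial.aeval x (f.map ρ) := by
    intro x
    have hu'p : (A (u : ℚ_[p])) ^ p = A (u : ℚ_[p]) := by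
      rw [← map_pow]
      congr 1
      exact_mod_cast congrArg (fun z : ℤ_[p] => (z : ℚ_[p])) hup
    rw [hfdef]
    simp only [Polynomial.map_add, Polynomial.map_pow, Polynomial.map_mul, map_X, map_C,
      map_add, map_pow, map_mul, aeval_X, aeval_C, mul_pow, hu'p]
    ring
  have K1' : ∀ (k : ℕ) (x : Qpbar p),
      Polynomial.aeval (A (u : ℚ_[p]) * x) ((iterComp p f k).map ρ) =
        A (u : ℚ_[p]) * Polynomial.aeval x ((iterComp p f k).map ρ) := by
    intro k
    induction k with
    | zero => intro x; simp [iterComp]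
    | succ k ih =>
      intro x
      have hstep : (iterComp p f (k + 1)).map ρ =
          (f.map ρ).comp ((iterComp p f k).map ρ) := by
        rw [show iterComp p f (k + 1) = f.comp (iterComp p f k) from rfl, Polynomial.map_comp]
      rw [hstep, aeval_comp, aeval_comp, ih, K1]
  have hu'ne : A (u : ℚ_[p]) ≠ 0 := by
    have h1 : (u : ℚ_[p]) ≠ 0 := by
      simpa [PadicInt.coe_eq_zero] using hune
    intro hc
    exact h1 (A.injective (by rw [hc, map_zero]))
  -- Part (ii)
  have part2 : ∀ n : ℕ, 1 ≤ n →
      ∃ Q : Polynomial ℤ_[p],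
        (iterComp p f n = Q * iterComp p f (n - 1) ∧
        Q.natDegree = p ^ (n - 1) * (p - 1) ∧
        Q.IsEisensteinAt I ∧
        minpoly ℚ_[p] (ω n) = Q.map ρ ∧
        Polynomial.aeval (A (u : ℚ_[p]) * ω n) (Q.map ρ) = 0) ∧ Q.Monic := by
    intro n hn
    set g := iterComp p f (n - 1) with hg
    set Q : Polynomial ℤ_[p] := g ^ (p - 1) + C (u * p) with hQ
    have hfac : iterComp p f n = Q * g := by
      conv_lhs => rw [show n = (n - 1) + 1 by omega]
      show f.comp g = Q * g
      rw [hfdef, hQ, add_comp, pow_comp, mul_comp, X_comp, C_comp, add_mul, ← pow_succ,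
        show p - 1 + 1 = p by omega]
    have hgmon : g.Monic := (hGmonic (n - 1)).1
    have hgdeg : g.natDegree = p ^ (n - 1) := (hGmonic (n - 1)).2
    have hQdeg : Q.natDegree = p ^ (n - 1) * (p - 1) := by
      rw [hQ, natDegree_add_C, natDegree_pow, hgdeg, mul_comm]
    have hQdegpos : 0 < Q.natDegree := by
      rw [hQdeg]; exact Nat.mul_pos (pow_pos hpprime.pos _) (by omega)
    have hQmonic : Q.Monic := by
      apply (hgmon.pow (p - 1)).add_of_left
      refine lt_of_le_of_lt degree_C_le ?_
      rw [← natDegree_pos_iff_degree_pos, natDegree_pow, hgdeg]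
      exact Nat.mul_pos (by omega) (pow_pos hpprime.pos _)
    have hmapQ : Q.map π = X ^ (p ^ (n - 1) * (p - 1)) := by
      rw [hQ, Polynomial.map_add, Polynomial.map_pow, hmapG, map_C, hmk0, map_zero, add_zero,
        ← pow_mul]
    have hQ0 : Q.coeff 0 = u * p := by
      rw [hQ, coeff_zero_eq_eval_zero, eval_add, eval_pow, hG0, eval_C,
        zero_pow (by omega : p - 1 ≠ 0), zero_add]
    have hnotunit : ¬ IsUnit (p : ℤ_[p]) := PadicInt.irreducible_p.not_isUnit
    have heis : Q.IsEisensteinAt I := by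
      refine ⟨?_, ?_, ?_⟩
      · rw [hQmonic.leadingCoeff, hI, Ideal.mem_span_singleton]
        intro hdvd
        exact hnotunit (isUnit_of_dvd_one hdvd)
      · intro i hi
        rw [hmemI, ← coeff_map, hmapQ, coeff_X_pow, if_neg (by rw [hQdeg] at hi; omega)]
      · rw [hQ0, hI, Ideal.span_singleton_pow, Ideal.mem_span_singleton]
        intro hdvd
        obtain ⟨c, hc⟩ := hdvd
        have hcc : u = p * c := by
          apply mul_right_cancel₀ hpne
          rw [hc]; ring
        exact hnotunit (isUnit_of_dvd_unit ⟨c, hcc⟩ huu)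
    have hIprime : I.IsPrime := by
      rw [hI, ← PadicInt.maximalIdeal_eq_span_p]
      exact (IsLocalRing.maximalIdeal.isMaximal ℤ_[p]).isPrime
    have hQirr : Irreducible Q :=
      heis.irreducible hIprime hQmonic.isPrimitive hQdegpos
    have hQmapirr : Irreducible (Q.map ρ) :=
      hQmonic.irreducible_iff_irreducible_map_fraction_map.mp hQirr
    have hrootn : Polynomial.aeval (ω n) (Q.map ρ) = 0 := by
      have h1 : Polynomial.aeval (ω n) ((iterComp p f n).map ρ) = 0 := by
        have h := K2 n 0; rw [zero_add] at h; rw [h, hω0]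
      have h2 : Polynomial.aeval (ω n) (g.map ρ) = ω 1 := by
        have h := K2 (n - 1) 1
        rwa [show 1 + (n - 1) = n by omega] at h
      rw [hfac, Polynomial.map_mul, map_mul, h2] at h1
      exact (mul_eq_zero.mp h1).resolve_right hω1
    have hrootu : Polynomial.aeval (A (u : ℚ_[p]) * ω n) (Q.map ρ) = 0 := by
      have h1 : Polynomial.aeval (A (u : ℚ_[p]) * ω n) ((iterComp p f n).map ρ) = 0 := by
        rw [K1']
        have h := K2 n 0; rw [zero_add] at h; rw [h, hω0, mul_zero]
      have h2 : Polynomial.aeval (A (u : ℚ_[p]) * ω n) (g.map ρ) = A (u : ℚ_[p]) * ω 1 := by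
        rw [hg, K1']
        have h := K2 (n - 1) 1
        rw [show 1 + (n - 1) = n by omega] at h
        rw [h]
      rw [hfac, Polynomial.map_mul, map_mul, h2] at h1
      exact (mul_eq_zero.mp h1).resolve_right (mul_ne_zero hu'ne hω1)
    have hmin : minpoly ℚ_[p] (ω n) = Q.map ρ :=
      (minpoly.eq_of_irreducible_of_monic hQmapirr hrootn (hQmonic.map ρ)).symm
    exact ⟨Q, ⟨hfac, hQdeg, heis, hmin, hrootu⟩, hQmonic⟩
  refine ⟨part1, fun n hn => (part2 n hn).imp (fun Q h => h.1), ?_⟩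
  -- Part (iii)
  intro n hn
  obtain ⟨Q, ⟨hfac, hQdeg, heis, hmin, hrootu⟩, hQmonic⟩ := part2 n hn
  have hint : IsIntegral ℚ_[p] (ω n) := (Algebra.IsAlgebraic.isAlgebraic (ω n)).isIntegral
  letI : FiniteDimensional ℚ_[p] ℚ_[p]⟮ω n⟯ := IntermediateField.adjoin.finiteDimensional hint
  set pb := IntermediateField.adjoin.powerBasis hint with hpb
  have hcoe : ∀ (P : Polynomial ℚ_[p]) (z : ℚ_[p]⟮ω n⟯),
      ((Polynomial.aeval z P : ℚ_[p]⟮ω n⟯) : Qpbar p) = Polynomial.aeval (z : Qpbar p) P := by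
    intro P z
    exact (Polynomial.aeval_algHom_apply (IntermediateField.val _) z P).symm
  have hgencoe : ((pb.gen : ℚ_[p]⟮ω n⟯) : Qpbar p) = ω n := by
    rw [hpb, IntermediateField.adjoin.powerBasis_gen]
    exact IntermediateField.AdjoinSimple.coe_gen _ _
  have hmem_un : A (u : ℚ_[p]) * ω n ∈ IntermediateField.adjoin ℚ_[p] {ω n} :=
    mul_mem (IntermediateField.algebraMap_mem _ _) (IntermediateField.mem_adjoin_simple_self _ _)
  set y : ℚ_[p]⟮ω n⟯ := ⟨A (u : ℚ_[p]) * ω n, hmem_un⟩ with hy0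
  have hy : Polynomial.aeval y (minpoly ℚ_[p] pb.gen) = 0 := by
    have h : ((Polynomial.aeval y (minpoly ℚ_[p] pb.gen) : ℚ_[p]⟮ω n⟯) : Qpbar p) = 0 := by
      rw [hcoe, hpb, IntermediateField.adjoin.powerBasis_gen, IntermediateField.minpoly_gen,
        hmin]
      exact hrootu
    rwa [ZeroMemClass.coe_eq_zero] at h
  set φ0 := pb.lift y hy with hφ0
  refine ⟨AlgEquiv.ofBijective φ0 φ0.bijective, ?_⟩
  intro m hm1 hmn h
  set Pm := (iterComp p f (n - m)).map ρ with hPm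
  have hωm : Polynomial.aeval (ω n) Pm = ω m := by
    have hk := K2 (n - m) m
    rwa [show m + (n - m) = n by omega] at hk
  have hsub : (⟨ω m, h⟩ : ℚ_[p]⟮ω n⟯) = Polynomial.aeval pb.gen Pm := by
    have hv : ((Polynomial.aeval pb.gen Pm : ℚ_[p]⟮ω n⟯) : Qpbar p) = ω m := by
      rw [hcoe, hgencoe, hωm]
    exact Subtype.ext hv.symm
  rw [hsub]
  calc ((AlgEquiv.ofBijective φ0 φ0.bijective) (Polynomial.aeval pb.gen Pm) : Qpbar p)
      = ((φ0 (Polynomial.aeval pb.gen Pm) : ℚ_[p]⟮ω n⟯) : Qpbar p) := by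
        rw [AlgEquiv.coe_ofBijective]
    _ = ((Polynomial.aeval (φ0 pb.gen) Pm : ℚ_[p]⟮ω n⟯) : Qpbar p) := by
        rw [Polynomial.aeval_algHom_apply]
    _ = ((Polynomial.aeval y Pm : ℚ_[p]⟮ω n⟯) : Qpbar p) := by
        rw [hφ0, pb.lift_gen]
    _ = Polynomial.aeval ((y : Qpbar p)) Pm := hcoe Pm y
    _ = A (u : ℚ_[p]) * Polynomial.aeval (ω n) Pm := K1' (n - m) (ω n)
    _ = A (u : ℚ_[p]) * ω m := by rw [hωm]
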